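/- Fix integers 2 ≤ L < k and 0 < μ < 1. The number of (μ,L)-readable cyclically reduced words of length n in F(a_1,...,a_k) is at most C (μn)^{3L+1} (6L)^n (2k-1)^{μn} for a constant C > 0 independent of n. -/

import Mathlib

open Filter

/-- The alphabet `{a_1,...,a_k}^{±1}` of the free group `F(a_1,...,a_k)`. -/
abbrev Letter (k : ℕ) := Fin k × Bool

/-- Formal inverse of a letter. -/
def linv {k : ℕ} (x : Letter k) : Letter k := (x.1, !x.2)

/-- A word is freely reduced if no letter is followed by its inverse. -/
def Reduced {k : ℕ} (w : List (Letter k)) : Prop :=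
  w.Chain' (fun x y => y ≠ linv x)

/-- A word is cyclically reduced if all its cyclic permutations are reduced. -/
def CyclRed {k : ℕ} (w : List (Letter k)) : Prop :=
  ∀ r : ℕ, Reduced (w.rotate r)

/-- The set of cyclically reduced words in `F(a_1,...,a_k)`. -/
def Ck (k : ℕ) : Set (List (Letter k)) := {w | CyclRed w}

/-- `gam Q n` is the number of words of length `n` in `Q`. -/
noncomputable def gam {k : ℕ} (Q : Set (List (Letter k))) (n : ℕ) : ℕ :=
  Nat.card {w : List (Letter k) // w ∈ Q ∧ w.length = n}

/-- A finite connected folded graph with edges labelled by letters of `F(a_1,...,a_k)`,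
in Serre's formalism (edges come with a fixed-point-free involution `bar`). -/
structure LGraph (k : ℕ) where
  V : Type
  E : Type
  [fintypeV : Fintype V]
  [fintypeE : Fintype E]
  ini : E → V
  bar : E → E
  bar_invol : ∀ e, bar (bar e) = e
  bar_ne : ∀ e, bar e ≠ e
  lab : E → Letter k
  lab_bar : ∀ e, lab (bar e) = linv (lab e)
  folded : ∀ e f, ini e = ini f → lab e = lab f → e = f
  connected : ∀ u v : V, Relation.ReflTransGen (fun x y => ∃ e, ini e = x ∧ ini (bar e) = y) u v

/-- Degree of a vertex: number of oriented edges starting at it. -/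
noncomputable def LGraph.deg {k : ℕ} (Γ : LGraph k) (v : Γ.V) : ℕ :=
  Nat.card {e : Γ.E // Γ.ini e = v}

/-- Volume: the number of non-oriented edges. -/
noncomputable def LGraph.vol {k : ℕ} (Γ : LGraph k) : ℕ := Nat.card Γ.E / 2

/-- Rank of the (free) fundamental group of a finite connected graph:
(#non-oriented edges) - (#vertices) + 1. -/
noncomputable def LGraph.rank {k : ℕ} (Γ : LGraph k) : ℕ :=
  Γ.vol + 1 - Nat.card Γ.V

/-- `Γ.Reads w` : there is an immersed path in `Γ` labelled `w`. -/
def LGraph.Reads {k : ℕ} (Γ : LGraph k) (w : List (Letter k)) : Prop :=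
  ∃ p : ℕ → Γ.E,
    (∀ i, i + 1 < w.length →
      Γ.ini (p (i + 1)) = Γ.ini (Γ.bar (p i)) ∧ p (i + 1) ≠ Γ.bar (p i)) ∧
    (∀ i (h : i < w.length), Γ.lab (p i) = w.get ⟨i, h⟩)

/-- A freely reduced word v is (μ,L)-readable if it can be read along an immersed path
in a finite connected folded labelled graph with free fundamental group of rank ≤ L,
at least one vertex of degree < 2k, at most two degree-one vertices, and volume ≤ μ|v|. -/
def MuLReadable {k : ℕ} (μ : ℝ) (L : ℕ) (w : List (Letter k)) : Prop :=
  ∃ Γ : LGraph k,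
    Γ.rank ≤ L ∧
    (∃ v : Γ.V, Γ.deg v < 2 * k) ∧
    Nat.card {v : Γ.V // Γ.deg v = 1} ≤ 2 ∧
    Γ.Reads w ∧
    (Γ.vol : ℝ) ≤ μ * w.length

open Classical in
theorem _dummy : True := trivial

open scoped Classical

attribute [instance] LGraph.fintypeV LGraph.fintypeE

section Dev
variable {k : ℕ}

lemma linv_linv (x : Letter k) : linv (linv x) = x := by
  cases x with | mk a b => simp [linv]

/-- Numeric code of a letter, `< 2k`. -/
def lN {k : ℕ} (x : Letter k) : ℕ := 2 * x.1.val + (if x.2 then 1 else 0)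

lemma lN_lt (x : Letter k) : lN x < 2 * k := by
  obtain ⟨⟨a, ha⟩, b⟩ := x
  cases b <;> simp [lN] <;> omega

lemma lN_inj {x y : Letter k} (h : lN x = lN y) : x = y := by
  obtain ⟨⟨a, ha⟩, b⟩ := x
  obtain ⟨⟨c, hc⟩, d⟩ := y
  cases b <;> cases d <;> simp [lN] at h ⊢ <;> omega

/-- Encoding of a letter `y ≠ x` as a number `< 2k - 1`, relative to the excluded `x`. -/
def relEncN {k : ℕ} (x y : Letter k) : ℕ := if lN y < lN x then lN y else lN y - 1

lemma relEncN_lt {x y : Letter k} (hxy : y ≠ x) : relEncN x y < 2 * k - 1 := by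
  have h1 := lN_lt x
  have h2 := lN_lt y
  have h3 : lN y ≠ lN x := fun h => hxy (lN_inj h)
  unfold relEncN
  split <;> omega

lemma relEncN_inj {x y y' : Letter k} (hy : y ≠ x) (hy' : y' ≠ x)
    (h : relEncN x y = relEncN x y') : y = y' := by
  have h3 : lN y ≠ lN x := fun h => hy (lN_inj h)
  have h3' : lN y' ≠ lN x := fun h => hy' (lN_inj h)
  apply lN_inj
  unfold relEncN at h
  split at h <;> split at h <;> omega

/-- A traversal of length `n` of an `LGraph`: an immersed path whose label-word is reduced. -/
structure Run (k n : ℕ) where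
  G : LGraph k
  p : ℕ → G.E
  hpath : ∀ i, i + 1 < n → G.ini (p (i+1)) = G.ini (G.bar (p i)) ∧ p (i+1) ≠ G.bar (p i)
  hred : ∀ i, 0 < i → i < n → G.lab (p i) ≠ linv (G.lab (p (i-1)))

namespace Run

variable {n : ℕ} (R : Run k n)

/-- The label word of the run (as a function). -/
def w (i : ℕ) : Letter k := R.G.lab (R.p i)

/-- The vertex sequence of the walk. -/
def u : ℕ → R.G.V
  | 0 => R.G.ini (R.p 0)
  | (t+1) => R.G.ini (R.G.bar (R.p t))

lemma ini_p {i : ℕ} (hi : i < n) : R.G.ini (R.p i) = R.u i := by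
  cases i with
  | zero => rfl
  | succ t => exact (R.hpath t hi).1

/-- Step `i` traverses an edge whose pair was never traversed before. -/
def newS (i : ℕ) : Prop := ∀ j < i, R.p j ≠ R.p i ∧ R.p j ≠ R.G.bar (R.p i)

lemma newS_zero : R.newS 0 := fun j hj => absurd hj (Nat.not_lt_zero j)

/-- `v` is visited by time `i`. -/
def vis (i : ℕ) (v : R.G.V) : Prop := ∃ t ≤ i, R.u t = v

/-- A merge step: a new edge leading to an already visited vertex. -/
def mrg (i : ℕ) : Prop := R.newS i ∧ R.vis i (R.u (i+1))

/-- Number of new steps before `i`. -/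
noncomputable def Dd (i : ℕ) : ℕ := ((Finset.range i).filter (fun t => R.newS t)).card

/-- Number of merge steps before `i`. -/
noncomputable def Mm (i : ℕ) : ℕ := ((Finset.range i).filter (fun t => R.mrg t)).card

/-- Number of vertices visited by time `i`. -/
noncomputable def Ww (i : ℕ) : ℕ := ((Finset.range (i+1)).image R.u).card

lemma exists_disc (i : ℕ) : ∃ j, R.p j = R.p i ∨ R.p j = R.G.bar (R.p i) := ⟨i, Or.inl rfl⟩

/-- Discovery time of the edge-pair of step `i`. -/
noncomputable def dT (i : ℕ) : ℕ := Nat.find (R.exists_disc i)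

lemma dT_le (i : ℕ) : R.dT i ≤ i := Nat.find_min' _ (Or.inl rfl)

lemma dT_spec (i : ℕ) : R.p (R.dT i) = R.p i ∨ R.p (R.dT i) = R.G.bar (R.p i) :=
  Nat.find_spec (R.exists_disc i)

lemma dT_lt_of_old {i : ℕ} (h : ¬ R.newS i) : R.dT i < i := by
  unfold newS at h
  push_neg at h
  obtain ⟨j, hj, hcase⟩ := h
  rcases Classical.em (R.p j = R.p i) with h1 | h1
  · exact lt_of_le_of_lt (Nat.find_min' _ (Or.inl h1)) hj
  · exact lt_of_le_of_lt (Nat.find_min' _ (Or.inr (hcase h1))) hj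

lemma bar_inj {e f : R.G.E} (h : R.G.bar e = R.G.bar f) : e = f := by
  have := congrArg R.G.bar h
  rwa [R.G.bar_invol, R.G.bar_invol] at this

lemma newS_dT (i : ℕ) : R.newS (R.dT i) := by
  intro j hj
  constructor
  · intro hc
    rcases R.dT_spec i with h | h
    · exact Nat.find_min (R.exists_disc i) hj (Or.inl (hc.trans h))
    · exact Nat.find_min (R.exists_disc i) hj (Or.inr (hc.trans h))
  · intro hc
    rcases R.dT_spec i with h | h
    · exact Nat.find_min (R.exists_disc i) hj
        (Or.inr (by rw [hc, h]))
    · refine Nat.find_min (R.exists_disc i) hj (Or.inl ?_)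
      rw [hc, h, R.G.bar_invol]

end Run
end Dev
namespace Run
variable {k n : ℕ} (R : Run k n)

/-- The germ (oriented edge) encoded by `c`: `c = 2t` is `p t`, `c = 2t+1` is `bar (p t)`. -/
noncomputable def germC (c : ℕ) : R.G.E :=
  if c % 2 = 1 then R.G.bar (R.p (c / 2)) else R.p (c / 2)

/-- The germ encoded by `c` starts at the current vertex `u i`. -/
def atVC (i c : ℕ) : Prop :=
  (if c % 2 = 1 then R.u (c / 2 + 1) else R.u (c / 2)) = R.u i

/-- `c` encodes a known germ at `u i`, distinct from the reverse of the incoming edge. -/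
noncomputable def validC (i c : ℕ) : Prop :=
  c / 2 < i ∧ R.newS (c / 2) ∧ R.atVC i c ∧ R.germC c ≠ R.G.bar (R.p (i - 1))

noncomputable def Sset (i : ℕ) : Finset ℕ := (Finset.range (2 * i)).filter (R.validC i)

/-- The code of the germ of the current edge `p i` (when it is old). -/
noncomputable def keyC (i : ℕ) : ℕ :=
  2 * R.dT i + (if R.p (R.dT i) = R.p i then 0 else 1)

lemma keyC_div (i : ℕ) : R.keyC i / 2 = R.dT i := by
  unfold keyC; split <;> omega

lemma germC_keyC (i : ℕ) : R.germC (R.keyC i) = R.p i := by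
  unfold germC keyC
  rcases Classical.em (R.p (R.dT i) = R.p i) with h | h
  · rw [if_pos h]
    rw [if_neg (by simp [Nat.mul_add_mod] : ¬ (2 * R.dT i + 0) % 2 = 1)]
    rw [Nat.mul_add_div (by norm_num)]
    simpa using h
  · rw [if_neg h]
    rw [if_pos (by simp [Nat.mul_add_mod] : (2 * R.dT i + 1) % 2 = 1)]
    rw [Nat.mul_add_div (by norm_num)]
    simp only [Nat.reduceDiv, Nat.add_zero]
    rcases R.dT_spec i with h1 | h1
    · exact absurd h1 h
    · rw [h1, R.G.bar_invol]

noncomputable def oldIdx (i : ℕ) : ℕ := ((R.Sset i).filter (fun c => c < R.keyC i)).card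

/-- The step symbol: `0` = new edge to a fresh vertex, `1` = new edge to an old vertex
(merge), `2 + j` = old edge with index `j` among known germs. -/
noncomputable def σ (i : ℕ) : ℕ :=
  if R.newS i then (if R.vis i (R.u (i+1)) then 1 else 0) else 2 + R.oldIdx i

lemma newS_iff_σ (i : ℕ) : R.newS i ↔ R.σ i < 2 := by
  unfold σ
  rcases Classical.em (R.newS i) with h | h
  · rw [if_pos h]; split <;> simp [h]
  · rw [if_neg h]; simp [h]; omega

lemma mrg_iff_σ (i : ℕ) : R.mrg i ↔ R.σ i = 1 := by
  unfold σ mrg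
  rcases Classical.em (R.newS i) with h | h
  · rw [if_pos h]
    rcases Classical.em (R.vis i (R.u (i+1))) with h2 | h2
    · simp [h, h2]
    · simp [h, h2]
  · rw [if_neg h]; simp [h]; omega

/-- First time the walk is at the endpoint of edge `p i` (used at merge steps). -/
noncomputable def t0 (i : ℕ) : ℕ :=
  if h : ∃ t, R.u t = R.u (i+1) then Nat.find h else 0

lemma t0_spec {i : ℕ} (h : R.mrg i) : R.u (R.t0 i) = R.u (i+1) ∧ R.t0 i ≤ i := by
  obtain ⟨t, ht, hut⟩ := h.2
  have hex : ∃ t, R.u t = R.u (i+1) := ⟨t, hut⟩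
  unfold t0
  rw [dif_pos hex]
  exact ⟨Nat.find_spec hex, le_trans (Nat.find_min' hex hut) ht⟩

/-- The relative code of the letter at step `i` (meaningful for new steps `i ≥ 1`). -/
noncomputable def rC (i : ℕ) : ℕ := relEncN (linv (R.w (i-1))) (R.w i)

lemma rC_lt {i : ℕ} (h0 : 0 < i) (hi : i < n) (hk : 0 < k) : R.rC i < 2 * k - 1 :=
  relEncN_lt (R.hred i h0 hi)

/- counting lemmas -/

lemma Dd_succ (i : ℕ) : R.Dd (i+1) = R.Dd i + (if R.newS i then 1 else 0) := by
  unfold Dd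
  rw [Finset.range_add_one, Finset.filter_insert]
  split
  · rw [Finset.card_insert_of_notMem (by simp)]
  · rfl

lemma Mm_succ (i : ℕ) : R.Mm (i+1) = R.Mm i + (if R.mrg i then 1 else 0) := by
  unfold Mm
  rw [Finset.range_add_one, Finset.filter_insert]
  split
  · rw [Finset.card_insert_of_notMem (by simp)]
  · rfl

lemma Dd_mono : Monotone R.Dd := by
  intro a b hab
  exact Finset.card_le_card (Finset.filter_subset_filter _
    (Finset.range_subset_range.mpr hab))

lemma Mm_mono : Monotone R.Mm := by
  intro a b hab
  exact Finset.card_le_card (Finset.filter_subset_filter _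
    (Finset.range_subset_range.mpr hab))

lemma Dd_unique {i j : ℕ} (hi : R.newS i) (hj : R.newS j) (h : R.Dd i = R.Dd j) : i = j := by
  by_contra hne
  rcases Nat.lt_or_ge i j with hij | hij
  · have h1 : R.Dd (i+1) ≤ R.Dd j := R.Dd_mono hij
    rw [R.Dd_succ, if_pos hi] at h1
    omega
  · have hij' : j < i := by omega
    have h1 : R.Dd (j+1) ≤ R.Dd i := R.Dd_mono hij'
    rw [R.Dd_succ, if_pos hj] at h1
    omega

lemma Mm_unique {i j : ℕ} (hi : R.mrg i) (hj : R.mrg j) (h : R.Mm i = R.Mm j) : i = j := by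
  by_contra hne
  rcases Nat.lt_or_ge i j with hij | hij
  · have h1 : R.Mm (i+1) ≤ R.Mm j := R.Mm_mono hij
    rw [R.Mm_succ, if_pos hi] at h1
    omega
  · have hij' : j < i := by omega
    have h1 : R.Mm (j+1) ≤ R.Mm i := R.Mm_mono hij'
    rw [R.Mm_succ, if_pos hj] at h1
    omega

/-- Packaged new-letter data, indexed by discovery count. -/
noncomputable def rP (d : ℕ) : ℕ :=
  if h : ∃ i, i < n ∧ 0 < i ∧ R.newS i ∧ R.Dd i = d then R.rC (Classical.choose h) else 0

lemma rP_eq {i : ℕ} (hi : i < n) (h0 : 0 < i) (hnew : R.newS i) : R.rP (R.Dd i) = R.rC i := by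
  have hex : ∃ j, j < n ∧ 0 < j ∧ R.newS j ∧ R.Dd j = R.Dd i := ⟨i, hi, h0, hnew, rfl⟩
  unfold rP
  rw [dif_pos hex]
  obtain ⟨h1, h2, h3, h4⟩ := Classical.choose_spec hex
  rw [R.Dd_unique h3 hnew h4]

/-- Packaged merge-target data, indexed by merge count. -/
noncomputable def νP (j : ℕ) : ℕ :=
  if h : ∃ i, i < n ∧ R.mrg i ∧ R.Mm i = j then R.t0 (Classical.choose h) else 0

lemma νP_eq {i : ℕ} (hi : i < n) (hm : R.mrg i) : R.νP (R.Mm i) = R.t0 i := by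
  have hex : ∃ j, j < n ∧ R.mrg j ∧ R.Mm j = R.Mm i := ⟨i, hi, hm, rfl⟩
  unfold νP
  rw [dif_pos hex]
  obtain ⟨h1, h2, h3⟩ := Classical.choose_spec hex
  rw [R.Mm_unique h2 hm h3]

end Run
namespace Run
variable {k n : ℕ}

lemma u_succ (R : Run k n) (t : ℕ) : R.u (t+1) = R.G.ini (R.G.bar (R.p t)) := rfl

lemma bar_ne' (R : Run k n) (e : R.G.E) : e ≠ R.G.bar e := fun h => R.G.bar_ne e h.symm

/-- The invariant carried through the decoding induction: the two runs have the same
coincidence pattern of vertices and edges, and the same labels, up to time `i`. -/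
def Inv (R R' : Run k n) (i : ℕ) : Prop :=
  (∀ s t, s ≤ i → t ≤ i → (R.u s = R.u t ↔ R'.u s = R'.u t)) ∧
  (∀ s t, s < i → t < i → (R.p s = R.p t ↔ R'.p s = R'.p t)) ∧
  (∀ s t, s < i → t < i → (R.p s = R.G.bar (R.p t) ↔ R'.p s = R'.G.bar (R'.p t))) ∧
  (∀ s, s < i → R.w s = R'.w s)

section Ext
variable {R R' : Run k n} {i : ℕ}

lemma Inv_u_ext {t₀ : ℕ} (ht₀ : t₀ ≤ i)
    (hu : ∀ s t, s ≤ i → t ≤ i → (R.u s = R.u t ↔ R'.u s = R'.u t))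
    (h1 : R.u (i+1) = R.u t₀) (h2 : R'.u (i+1) = R'.u t₀) :
    ∀ s t, s ≤ i+1 → t ≤ i+1 → (R.u s = R.u t ↔ R'.u s = R'.u t) := by
  intro s t hs ht
  rcases Classical.em (s = i+1) with rfl | hs'
  · rcases Classical.em (t = i+1) with rfl | ht'
    · simp
    · have ht2 : t ≤ i := by omega
      rw [h1, h2]; exact hu t₀ t ht₀ ht2
  · have hs2 : s ≤ i := by omega
    rcases Classical.em (t = i+1) with rfl | ht'
    · rw [h1, h2]; exact hu s t₀ hs2 ht₀
    · exact hu s t hs2 (by omega)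

lemma Inv_u_ext_fresh
    (hu : ∀ s t, s ≤ i → t ≤ i → (R.u s = R.u t ↔ R'.u s = R'.u t))
    (h1 : ∀ t ≤ i, R.u (i+1) ≠ R.u t) (h2 : ∀ t ≤ i, R'.u (i+1) ≠ R'.u t) :
    ∀ s t, s ≤ i+1 → t ≤ i+1 → (R.u s = R.u t ↔ R'.u s = R'.u t) := by
  intro s t hs ht
  rcases Classical.em (s = i+1) with rfl | hs'
  · rcases Classical.em (t = i+1) with rfl | ht'
    · simp
    · have ht2 : t ≤ i := by omega
      exact iff_of_false (h1 t ht2) (h2 t ht2)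
  · have hs2 : s ≤ i := by omega
    rcases Classical.em (t = i+1) with rfl | ht'
    · exact iff_of_false (fun h => h1 s hs2 h.symm) (fun h => h2 s hs2 h.symm)
    · exact hu s t hs2 (by omega)

lemma eq_bar_comm (R : Run k n) (a b : R.G.E) : a = R.G.bar b ↔ b = R.G.bar a := by
  constructor <;> intro h <;> rw [h, R.G.bar_invol]

lemma Inv_p_ext_old {t₀ : ℕ} (ht₀ : t₀ < i)
    (hp : ∀ s t, s < i → t < i → (R.p s = R.p t ↔ R'.p s = R'.p t))
    (hpb : ∀ s t, s < i → t < i → (R.p s = R.G.bar (R.p t) ↔ R'.p s = R'.G.bar (R'.p t)))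
    (hcase : (R.p i = R.p t₀ ∧ R'.p i = R'.p t₀) ∨
      (R.p i = R.G.bar (R.p t₀) ∧ R'.p i = R'.G.bar (R'.p t₀))) :
    (∀ s t, s < i+1 → t < i+1 → (R.p s = R.p t ↔ R'.p s = R'.p t)) ∧
    (∀ s t, s < i+1 → t < i+1 → (R.p s = R.G.bar (R.p t) ↔ R'.p s = R'.G.bar (R'.p t))) := by
  constructor
  · intro s t hs ht
    rcases Classical.em (s = i) with rfl | hs'
    · rcases Classical.em (t = s) with rfl | ht'
      · simp
      · have ht2 : t < s := by omega
        rcases hcase with ⟨e1, e2⟩ | ⟨e1, e2⟩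
        · rw [e1, e2]; exact hp t₀ t ht₀ ht2
        · rw [e1, e2]
          constructor
          · intro h; exact ((hpb t t₀ ht2 ht₀).mp h.symm).symm
          · intro h; exact ((hpb t t₀ ht2 ht₀).mpr h.symm).symm
    · have hs2 : s < i := by omega
      rcases Classical.em (t = i) with rfl | ht'
      · rcases hcase with ⟨e1, e2⟩ | ⟨e1, e2⟩
        · rw [e1, e2]; exact hp s t₀ hs2 ht₀
        · rw [e1, e2]; exact hpb s t₀ hs2 ht₀
      · exact hp s t hs2 (by omega)
  · intro s t hs ht
    rcases Classical.em (s = i) with rfl | hs'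
    · rcases Classical.em (t = s) with rfl | ht'
      · exact iff_of_false (R.bar_ne' _) (R'.bar_ne' _)
      · have ht2 : t < s := by omega
        rcases hcase with ⟨e1, e2⟩ | ⟨e1, e2⟩
        · rw [e1, e2]; exact hpb t₀ t ht₀ ht2
        · rw [e1, e2]
          constructor
          · intro h; exact congrArg R'.G.bar ((hp t₀ t ht₀ ht2).mp (R.bar_inj h))
          · intro h; exact congrArg R.G.bar ((hp t₀ t ht₀ ht2).mpr (R'.bar_inj h))
    · have hs2 : s < i := by omega
      rcases Classical.em (t = i) with rfl | ht'
      · rcases hcase with ⟨e1, e2⟩ | ⟨e1, e2⟩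
        · rw [e1, e2]; exact hpb s t₀ hs2 ht₀
        · rw [e1, e2, R.G.bar_invol, R'.G.bar_invol]; exact hp s t₀ hs2 ht₀
      · exact hpb s t hs2 (by omega)

lemma Inv_p_ext_new (h1 : R.newS i) (h2 : R'.newS i)
    (hp : ∀ s t, s < i → t < i → (R.p s = R.p t ↔ R'.p s = R'.p t))
    (hpb : ∀ s t, s < i → t < i → (R.p s = R.G.bar (R.p t) ↔ R'.p s = R'.G.bar (R'.p t))) :
    (∀ s t, s < i+1 → t < i+1 → (R.p s = R.p t ↔ R'.p s = R'.p t)) ∧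
    (∀ s t, s < i+1 → t < i+1 → (R.p s = R.G.bar (R.p t) ↔ R'.p s = R'.G.bar (R'.p t))) := by
  constructor
  · intro s t hs ht
    rcases Classical.em (s = i) with rfl | hs'
    · rcases Classical.em (t = s) with rfl | ht'
      · simp
      · have ht2 : t < s := by omega
        exact iff_of_false (fun h => (h1 t ht2).1 h.symm) (fun h => (h2 t ht2).1 h.symm)
    · have hs2 : s < i := by omega
      rcases Classical.em (t = i) with rfl | ht'
      · exact iff_of_false (h1 s hs2).1 (h2 s hs2).1
      · exact hp s t hs2 (by omega)
  · intro s t hs ht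
    rcases Classical.em (s = i) with rfl | hs'
    · rcases Classical.em (t = s) with rfl | ht'
      · exact iff_of_false (R.bar_ne' _) (R'.bar_ne' _)
      · have ht2 : t < s := by omega
        constructor
        · intro h
          exact absurd (by rw [h, R.G.bar_invol] : R.G.bar (R.p s) = R.p t)
            (fun hh => (h1 t ht2).2 hh.symm)
        · intro h
          exact absurd (by rw [h, R'.G.bar_invol] : R'.G.bar (R'.p s) = R'.p t)
            (fun hh => (h2 t ht2).2 hh.symm)
    · have hs2 : s < i := by omega
      rcases Classical.em (t = i) with rfl | ht'
      · exact iff_of_false (h1 s hs2).2 (h2 s hs2).2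
      · exact hpb s t hs2 (by omega)

end Ext
end Run
namespace Run
variable {k n : ℕ}

section Transfer
variable {R R' : Run k n} {i : ℕ}

/-- One direction of the transfer of validity of germ codes. -/
lemma validC_imp (hi : i < n) (h0 : 0 < i)
    (hnw : ∀ t, t < n → (R.newS t ↔ R'.newS t))
    (hu : ∀ s t, s ≤ i → t ≤ i → (R.u s = R.u t ↔ R'.u s = R'.u t))
    (hp : ∀ s t, s < i → t < i → (R.p s = R.p t ↔ R'.p s = R'.p t))
    (hpb : ∀ s t, s < i → t < i → (R.p s = R.G.bar (R.p t) ↔ R'.p s = R'.G.bar (R'.p t)))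
    {c : ℕ} (h : R.validC i c) : R'.validC i c := by
  obtain ⟨h1, h2, h3, h4⟩ := h
  refine ⟨h1, (hnw _ (lt_trans h1 hi)).mp h2, ?_, ?_⟩
  · unfold atVC at h3 ⊢
    rcases Classical.em (c % 2 = 1) with hc | hc
    · rw [if_pos hc] at h3 ⊢
      exact (hu (c/2+1) i (by omega) le_rfl).mp h3
    · rw [if_neg hc] at h3 ⊢
      exact (hu (c/2) i (by omega) le_rfl).mp h3
  · unfold germC at h4 ⊢
    have hi1 : i - 1 < i := by omega
    rcases Classical.em (c % 2 = 1) with hc | hc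
    · rw [if_pos hc] at h4 ⊢
      intro hcon
      exact h4 (congrArg R.G.bar ((hp (c/2) (i-1) h1 hi1).mpr (R'.bar_inj hcon)))
    · rw [if_neg hc] at h4 ⊢
      intro hcon
      exact h4 ((hpb (c/2) (i-1) h1 hi1).mpr hcon)

lemma Sset_eq (hi : i < n) (h0 : 0 < i)
    (hnw : ∀ t, t < n → (R.newS t ↔ R'.newS t))
    (hu : ∀ s t, s ≤ i → t ≤ i → (R.u s = R.u t ↔ R'.u s = R'.u t))
    (hp : ∀ s t, s < i → t < i → (R.p s = R.p t ↔ R'.p s = R'.p t))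
    (hpb : ∀ s t, s < i → t < i → (R.p s = R.G.bar (R.p t) ↔ R'.p s = R'.G.bar (R'.p t))) :
    R.Sset i = R'.Sset i := by
  ext c
  unfold Sset
  simp only [Finset.mem_filter, Finset.mem_range]
  constructor
  · rintro ⟨hr, hv⟩
    exact ⟨hr, validC_imp hi h0 hnw hu hp hpb hv⟩
  · rintro ⟨hr, hv⟩
    refine ⟨hr, validC_imp hi h0 (fun t ht => (hnw t ht).symm)
      (fun s t hs ht => (hu s t hs ht).symm)
      (fun s t hs ht => (hp s t hs ht).symm)
      (fun s t hs ht => (hpb s t hs ht).symm) hv⟩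

end Transfer

variable (R : Run k n)

lemma keyC_mem {i : ℕ} (hold : ¬ R.newS i) (hi : i < n) (h0 : 0 < i) :
    R.keyC i ∈ R.Sset i := by
  have hdT : R.dT i < i := R.dT_lt_of_old hold
  unfold Sset
  rw [Finset.mem_filter, Finset.mem_range]
  constructor
  · unfold keyC; split <;> omega
  · refine ⟨by rw [R.keyC_div]; exact hdT, by rw [R.keyC_div]; exact R.newS_dT i, ?_, ?_⟩
    · unfold atVC
      rw [R.keyC_div]
      rcases Classical.em (R.p (R.dT i) = R.p i) with hc | hc
      · have : R.keyC i % 2 = 0 := by unfold keyC; rw [if_pos hc]; omega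
        rw [if_neg (by omega)]
        rw [← R.ini_p (lt_trans hdT hi), hc, R.ini_p hi]
      · have : R.keyC i % 2 = 1 := by unfold keyC; rw [if_neg hc]; omega
        rw [if_pos this]
        have hspec : R.p (R.dT i) = R.G.bar (R.p i) := (R.dT_spec i).resolve_left hc
        rw [R.u_succ, hspec, R.G.bar_invol, R.ini_p hi]
    · rw [R.germC_keyC]
      obtain ⟨j, rfl⟩ : ∃ j, i = j + 1 := ⟨i - 1, by omega⟩
      have := (R.hpath j hi).2
      simpa using this

lemma filter_lt_card_inj {S : Finset ℕ} {a b : ℕ} (ha : a ∈ S) (hb : b ∈ S)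
    (h : (S.filter (fun c => c < a)).card = (S.filter (fun c => c < b)).card) : a = b := by
  have key : ∀ x y : ℕ, x ∈ S → y ∈ S → x < y →
      (S.filter (fun c => c < x)).card < (S.filter (fun c => c < y)).card := by
    intro x y hx hy hxy
    apply Finset.card_lt_card
    refine ⟨?_, ?_⟩
    · intro c hc
      rw [Finset.mem_filter] at hc ⊢
      exact ⟨hc.1, lt_trans hc.2 hxy⟩
    · intro hsub
      have : x ∈ S.filter (fun c => c < x) := hsub (Finset.mem_filter.mpr ⟨hx, hxy⟩)
      exact absurd (Finset.mem_filter.mp this).2 (lt_irrefl x)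
  rcases lt_trichotomy a b with hab | hab | hab
  · exact absurd h (Nat.ne_of_lt (key a b ha hb hab))
  · exact hab
  · exact absurd h (Nat.ne_of_gt (key b a hb ha hab))

lemma keyC_decode {R R' : Run k n} {i : ℕ} (h : R.keyC i = R'.keyC i) :
    R.dT i = R'.dT i ∧ ((R.p (R.dT i) = R.p i) ↔ (R'.p (R'.dT i) = R'.p i)) := by
  unfold keyC at h
  rcases Classical.em (R.p (R.dT i) = R.p i) with h1 | h1 <;>
    rcases Classical.em (R'.p (R'.dT i) = R'.p i) with h2 | h2
  · rw [if_pos h1, if_pos h2] at h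
    exact ⟨by omega, iff_of_true h1 h2⟩
  · rw [if_pos h1, if_neg h2] at h
    omega
  · rw [if_neg h1, if_pos h2] at h
    omega
  · rw [if_neg h1, if_neg h2] at h
    exact ⟨by omega, iff_of_false h1 h2⟩

end Run
namespace Run
variable {k n : ℕ}

/-- Core decoding theorem: two runs with the same code have the same label word. -/
theorem core (R R' : Run k n)
    (hσ : ∀ i, i < n → R.σ i = R'.σ i)
    (hc0 : R.w 0 = R'.w 0)
    (hrc : ∀ i, i < n → 0 < i → R.newS i → R.rC i = R'.rC i)
    (hν : ∀ i, i < n → R.mrg i → R.t0 i = R'.t0 i) :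
    ∀ i, i ≤ n → Inv R R' i := by
  have hnw : ∀ t, t < n → (R.newS t ↔ R'.newS t) := by
    intro t ht
    rw [R.newS_iff_σ, R'.newS_iff_σ, hσ t ht]
  have hmg : ∀ t, t < n → (R.mrg t ↔ R'.mrg t) := by
    intro t ht
    rw [R.mrg_iff_σ, R'.mrg_iff_σ, hσ t ht]
  intro i
  induction i with
  | zero =>
    intro _
    refine ⟨?_, ?_, ?_, ?_⟩
    · intro s t hs ht
      interval_cases s
      interval_cases t
      simp
    · intro s t hs; omega
    · intro s t hs; omega
    · intro s hs; omega
  | succ i ih =>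
    intro hi1
    have hi : i < n := by omega
    obtain ⟨hu, hp, hpb, hw⟩ := ih (by omega)
    by_cases hnew : R.newS i
    · -- new step
      have hnew' : R'.newS i := (hnw i hi).mp hnew
      have wi : R.w i = R'.w i := by
        rcases Nat.eq_zero_or_pos i with rfl | h0
        · exact hc0
        · have hrcc := hrc i hi h0 hnew
          unfold rC at hrcc
          rw [hw (i-1) (by omega)] at hrcc
          have hy : R.w i ≠ linv (R'.w (i-1)) := by
            rw [← hw (i-1) (by omega)]
            exact R.hred i h0 hi
          have hy' : R'.w i ≠ linv (R'.w (i-1)) := R'.hred i h0 hi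
          exact relEncN_inj hy hy' hrcc
      have hwx : ∀ s, s < i + 1 → R.w s = R'.w s := by
        intro s hs
        rcases Classical.em (s = i) with rfl | h
        · exact wi
        · exact hw s (by omega)
      obtain ⟨hpx, hpbx⟩ := Inv_p_ext_new hnew hnew' hp hpb
      by_cases hm : R.mrg i
      · have hm' : R'.mrg i := (hmg i hi).mp hm
        obtain ⟨hsp1, hsp2⟩ := R.t0_spec hm
        obtain ⟨hsp1', hsp2'⟩ := R'.t0_spec hm'
        rw [hν i hi hm] at hsp1 hsp2
        exact ⟨Inv_u_ext hsp2 hu hsp1.symm hsp1'.symm, hpx, hpbx, hwx⟩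
      · have hm' : ¬ R'.mrg i := fun h => hm ((hmg i hi).mpr h)
        have hv : ¬ R.vis i (R.u (i+1)) := fun h => hm ⟨hnew, h⟩
        have hv' : ¬ R'.vis i (R'.u (i+1)) := fun h => hm' ⟨hnew', h⟩
        have hf1 : ∀ t ≤ i, R.u (i+1) ≠ R.u t := by
          intro t ht hc
          exact hv ⟨t, ht, hc.symm⟩
        have hf2 : ∀ t ≤ i, R'.u (i+1) ≠ R'.u t := by
          intro t ht hc
          exact hv' ⟨t, ht, hc.symm⟩
        exact ⟨Inv_u_ext_fresh hu hf1 hf2, hpx, hpbx, hwx⟩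
    · -- old step
      have hnew' : ¬ R'.newS i := fun h => hnew ((hnw i hi).mpr h)
      have h0 : 0 < i := by
        rcases Nat.eq_zero_or_pos i with rfl | h0
        · exact absurd R.newS_zero hnew
        · exact h0
      have hoi : R.oldIdx i = R'.oldIdx i := by
        have := hσ i hi
        unfold σ at this
        rw [if_neg hnew, if_neg hnew'] at this
        omega
      have hSeq : R.Sset i = R'.Sset i := Sset_eq hi h0 hnw hu hp hpb
      have hkmem : R.keyC i ∈ R.Sset i := R.keyC_mem hnew hi h0
      have hkmem' : R'.keyC i ∈ R.Sset i := by rw [hSeq]; exact R'.keyC_mem hnew' hi h0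
      have hkey : R.keyC i = R'.keyC i := by
        apply filter_lt_card_inj hkmem hkmem'
        unfold oldIdx at hoi
        rw [← hSeq] at hoi
        exact hoi
      obtain ⟨hdT, hcond⟩ := keyC_decode hkey
      have hdTi : R.dT i < i := R.dT_lt_of_old hnew
      by_cases hc : R.p (R.dT i) = R.p i
      · -- p i is the edge discovered at time dT i, same orientation
        have hc' : R'.p (R'.dT i) = R'.p i := hcond.mp hc
        rw [← hdT] at hc'
        have wi : R.w i = R'.w i := by
          have hwd := hw (R.dT i) hdTi
          unfold w at hwd ⊢
          rw [← hc, ← hc', hwd]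
        have hwx : ∀ s, s < i + 1 → R.w s = R'.w s := by
          intro s hs
          rcases Classical.em (s = i) with rfl | h
          · exact wi
          · exact hw s (by omega)
        obtain ⟨hpx, hpbx⟩ := Inv_p_ext_old hdTi hp hpb (Or.inl ⟨hc.symm, hc'.symm⟩)
        have hv1 : R.u (i+1) = R.u (R.dT i + 1) := by
          rw [R.u_succ, R.u_succ, hc]
        have hv1' : R'.u (i+1) = R'.u (R.dT i + 1) := by
          rw [R'.u_succ, R'.u_succ, hc']
        exact ⟨Inv_u_ext (by omega) hu hv1 hv1', hpx, hpbx, hwx⟩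
      · -- p i is the reverse of the edge discovered at time dT i
        have hspec : R.p (R.dT i) = R.G.bar (R.p i) := (R.dT_spec i).resolve_left hc
        have hc2 : ¬ R'.p (R'.dT i) = R'.p i := fun h => hc (hcond.mpr h)
        have hspec' : R'.p (R'.dT i) = R'.G.bar (R'.p i) := (R'.dT_spec i).resolve_left hc2
        rw [← hdT] at hspec'
        have hpi : R.p i = R.G.bar (R.p (R.dT i)) := by
          rw [hspec, R.G.bar_invol]
        have hpi' : R'.p i = R'.G.bar (R'.p (R.dT i)) := by
          rw [hspec', R'.G.bar_invol]
        have wi : R.w i = R'.w i := by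
          have hwd := hw (R.dT i) hdTi
          unfold w at hwd ⊢
          rw [hpi, hpi', R.G.lab_bar, R'.G.lab_bar, hwd]
        have hwx : ∀ s, s < i + 1 → R.w s = R'.w s := by
          intro s hs
          rcases Classical.em (s = i) with rfl | h
          · exact wi
          · exact hw s (by omega)
        obtain ⟨hpx, hpbx⟩ := Inv_p_ext_old hdTi hp hpb (Or.inr ⟨hpi, hpi'⟩)
        have hv1 : R.u (i+1) = R.u (R.dT i) := by
          rw [R.u_succ, hpi, R.G.bar_invol, R.ini_p (lt_trans hdTi hi)]
        have hv1' : R'.u (i+1) = R'.u (R.dT i) := by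
          rw [R'.u_succ, hpi', R'.G.bar_invol, R'.ini_p (lt_trans hdTi hi)]
        exact ⟨Inv_u_ext (by omega) hu hv1 hv1', hpx, hpbx, hwx⟩

end Run
namespace LGraph
variable {k : ℕ} (Γ : LGraph k)

lemma deg_pos {u v : Γ.V} (huv : u ≠ v) : 0 < Γ.deg u := by
  have h := Γ.connected u v
  rcases (Relation.ReflTransGen.cases_head h) with rfl | ⟨c, ⟨e, he1, _⟩, _⟩
  · exact absurd rfl huv
  · have : Nonempty {e : Γ.E // Γ.ini e = u} := ⟨⟨e, he1⟩⟩
    exact Nat.card_pos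

lemma handshake : Fintype.card Γ.E = ∑ v : Γ.V, Γ.deg v := by
  have h1 : Fintype.card Γ.E = Fintype.card (Σ v : Γ.V, {e : Γ.E // Γ.ini e = v}) :=
    Fintype.card_congr (Equiv.sigmaFiberEquiv Γ.ini).symm
  rw [h1, Fintype.card_sigma]
  apply Finset.sum_congr rfl
  intro v _
  simp [LGraph.deg, Nat.card_eq_fintype_card]

lemma deg_le {L : ℕ} (hrank : Γ.rank ≤ L)
    (hdeg1 : Nat.card {v : Γ.V // Γ.deg v = 1} ≤ 2) (v : Γ.V) :
    Γ.deg v ≤ 2 * L + 3 := by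
  classical
  have hV : Γ.vol + 1 ≤ Fintype.card Γ.V + L := by
    unfold rank at hrank
    rw [Nat.card_eq_fintype_card] at hrank
    omega
  have hsum : Γ.deg v + ∑ u ∈ Finset.univ.erase v, Γ.deg u = Fintype.card Γ.E := by
    rw [Γ.handshake]
    exact Finset.add_sum_erase _ _ (Finset.mem_univ v)
  have hB : (Finset.univ.filter (fun u => Γ.deg u = 1)).card ≤ 2 := by
    have : Nat.card {v : Γ.V // Γ.deg v = 1} =
        (Finset.univ.filter (fun u => Γ.deg u = 1)).card := by
      rw [Nat.card_eq_fintype_card, Fintype.card_subtype]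
    omega
  have hpt : ∀ u ∈ Finset.univ.erase v, 2 ≤ Γ.deg u + (if Γ.deg u = 1 then 1 else 0) := by
    intro u hu
    have hne : u ≠ v := (Finset.mem_erase.mp hu).1
    have h1 := Γ.deg_pos hne
    split <;> omega
  have h2 : 2 * (Fintype.card Γ.V - 1) ≤ (∑ u ∈ Finset.univ.erase v, Γ.deg u) + 2 := by
    have hs : ∑ _u ∈ Finset.univ.erase v, (2:ℕ) ≤
        ∑ u ∈ Finset.univ.erase v, (Γ.deg u + (if Γ.deg u = 1 then 1 else 0)) :=
      Finset.sum_le_sum hpt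
    rw [Finset.sum_const, Finset.card_erase_of_mem (Finset.mem_univ v),
      Finset.card_univ, smul_eq_mul, Finset.sum_add_distrib] at hs
    have hb2 : (∑ u ∈ Finset.univ.erase v, (if Γ.deg u = 1 then (1:ℕ) else 0)) ≤ 2 := by
      rw [Finset.sum_boole]
      have hsub : (Finset.univ.erase v).filter (fun u => Γ.deg u = 1) ⊆
          Finset.univ.filter (fun u => Γ.deg u = 1) :=
        Finset.filter_subset_filter _ (Finset.subset_univ _)
      have := Finset.card_le_card hsub
      simp only [Nat.cast_id]
      omega
    omega
  have hvol : Γ.vol = Fintype.card Γ.E / 2 := by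
    unfold vol
    rw [Nat.card_eq_fintype_card]
  omega

lemma crossing {S : Finset Γ.V} {x y : Γ.V} (hx : x ∉ S) (hy : y ∈ S) :
    ∃ e, Γ.ini e ∉ S ∧ Γ.ini (Γ.bar e) ∈ S := by
  have h := Γ.connected x y
  revert hx
  induction h using Relation.ReflTransGen.head_induction_on with
  | refl => intro hx; exact absurd hy hx
  | head hstep _ ih =>
    rename_i a c _
    intro ha
    by_cases hc : c ∈ S
    · obtain ⟨e, he1, he2⟩ := hstep
      exact ⟨e, by rw [he1]; exact ha, by rw [he2]; exact hc⟩
    · exact ih hc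

lemma ext_count : ∀ (j : ℕ) (S : Finset Γ.V) (F : Finset Γ.E),
    S.Nonempty → (∀ e ∈ F, Γ.ini e ∈ S) → (∀ e ∈ F, Γ.bar e ∈ F) →
    Sᶜ.card = j → F.card + 2 * j ≤ Fintype.card Γ.E := by
  intro j
  induction j with
  | zero =>
    intro S F _ _ _ _
    simpa using Finset.card_le_univ F
  | succ j ih =>
    intro S F hS hini hbar hcompl
    obtain ⟨u, hu⟩ : Sᶜ.Nonempty := Finset.card_pos.mp (by omega)
    have hu' : u ∉ S := Finset.mem_compl.mp hu
    obtain ⟨s₀, hs₀⟩ := hS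
    obtain ⟨e, he1, he2⟩ := Γ.crossing hu' hs₀
    have heF : e ∉ F := fun h => he1 (hini e h)
    have hbeF : Γ.bar e ∉ F := by
      intro h
      have := hbar _ h
      rw [Γ.bar_invol] at this
      exact heF this
    have hene : e ≠ Γ.bar e := fun h => Γ.bar_ne e h.symm
    have hcard : (insert e (insert (Γ.bar e) F)).card = F.card + 2 := by
      rw [Finset.card_insert_of_notMem (by simp [hene, heF]),
        Finset.card_insert_of_notMem hbeF]
    have hmain := ih (insert (Γ.ini e) S) (insert e (insert (Γ.bar e) F))
      ⟨s₀, Finset.mem_insert_of_mem hs₀⟩ ?_ ?_ ?_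
    · omega
    · intro f hf
      rcases Finset.mem_insert.mp hf with rfl | hf
      · exact Finset.mem_insert_self _ _
      rcases Finset.mem_insert.mp hf with rfl | hf
      · exact Finset.mem_insert_of_mem he2
      · exact Finset.mem_insert_of_mem (hini f hf)
    · intro f hf
      rcases Finset.mem_insert.mp hf with rfl | hf
      · exact Finset.mem_insert_of_mem (Finset.mem_insert_self _ _)
      rcases Finset.mem_insert.mp hf with rfl | hf
      · rw [Γ.bar_invol]
        exact Finset.mem_insert_self _ _
      · exact Finset.mem_insert_of_mem (Finset.mem_insert_of_mem (hbar f hf))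
    · rw [Finset.compl_insert, Finset.card_erase_of_mem (Finset.mem_compl.mpr he1)]
      omega

end LGraph
namespace Run
variable {k n : ℕ} (R : Run k n)

lemma news_inj {t t' : ℕ} (ht : R.newS t) (ht' : R.newS t') (h : R.p t = R.p t') : t = t' := by
  rcases lt_trichotomy t t' with h1 | h1 | h1
  · exact absurd h (ht' t h1).1
  · exact h1
  · exact absurd h.symm (ht t' h1).1

lemma news_disj {t t' : ℕ} (ht : R.newS t) (ht' : R.newS t') :
    R.p t ≠ R.G.bar (R.p t') := by
  intro h
  rcases lt_trichotomy t t' with h1 | h1 | h1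
  · exact (ht' t h1).2 h
  · subst h1; exact R.bar_ne' _ h
  · exact (ht t' h1).2 ((R.eq_bar_comm _ _).mp h)

/-- The set of discovery times. -/
noncomputable def Tset : Finset ℕ := (Finset.range n).filter (fun t => R.newS t)

lemma Tset_card : R.Tset.card = R.Dd n := rfl

/-- The set of discovered (oriented) edges. -/
noncomputable def Fdisc : Finset R.G.E :=
  R.Tset.image R.p ∪ R.Tset.image (fun t => R.G.bar (R.p t))

lemma mem_Tset {t : ℕ} (h : t ∈ R.Tset) : t < n ∧ R.newS t := by
  unfold Tset at h
  rw [Finset.mem_filter, Finset.mem_range] at h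
  exact h

lemma Fdisc_card : R.Fdisc.card = 2 * R.Dd n := by
  unfold Fdisc
  rw [Finset.card_union_of_disjoint, Finset.card_image_of_injOn,
    Finset.card_image_of_injOn, Tset_card]
  · omega
  · intro t ht t' ht' h
    exact R.news_inj (R.mem_Tset ht).2 (R.mem_Tset ht').2 (R.bar_inj h)
  · intro t ht t' ht' h
    exact R.news_inj (R.mem_Tset ht).2 (R.mem_Tset ht').2 h
  · rw [Finset.disjoint_left]
    intro e he1 he2
    obtain ⟨t, ht, rfl⟩ := Finset.mem_image.mp he1
    obtain ⟨t', ht', hb⟩ := Finset.mem_image.mp he2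
    exact R.news_disj (R.mem_Tset ht).2 (R.mem_Tset ht').2 hb.symm

/-- The visited vertex set. -/
noncomputable def Vvis : Finset R.G.V := (Finset.range (n+1)).image R.u

lemma Vvis_card : R.Vvis.card = R.Ww n := rfl

lemma count_ineq : 2 * R.Dd n + 2 * (Fintype.card R.G.V - R.Ww n) ≤ Fintype.card R.G.E := by
  have h := R.G.ext_count (Fintype.card R.G.V - R.Ww n) R.Vvis R.Fdisc ?_ ?_ ?_ ?_
  · rw [R.Fdisc_card] at h
    omega
  · exact ⟨R.u 0, Finset.mem_image.mpr ⟨0, by simp, rfl⟩⟩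
  · intro e he
    unfold Fdisc at he
    rcases Finset.mem_union.mp he with he | he
    · obtain ⟨t, ht, rfl⟩ := Finset.mem_image.mp he
      obtain ⟨htn, _⟩ := R.mem_Tset ht
      rw [R.ini_p htn]
      exact Finset.mem_image.mpr ⟨t, by simp [Finset.mem_range]; omega, rfl⟩
    · obtain ⟨t, ht, rfl⟩ := Finset.mem_image.mp he
      obtain ⟨htn, _⟩ := R.mem_Tset ht
      rw [← R.u_succ]
      exact Finset.mem_image.mpr ⟨t+1, by simp [Finset.mem_range]; omega, rfl⟩
  · intro e he
    unfold Fdisc at he ⊢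
    rcases Finset.mem_union.mp he with he | he
    · obtain ⟨t, ht, rfl⟩ := Finset.mem_image.mp he
      exact Finset.mem_union_right _ (Finset.mem_image.mpr ⟨t, ht, rfl⟩)
    · obtain ⟨t, ht, rfl⟩ := Finset.mem_image.mp he
      rw [R.G.bar_invol]
      exact Finset.mem_union_left _ (Finset.mem_image.mpr ⟨t, ht, rfl⟩)
  · rw [Finset.card_compl, R.Vvis_card]

lemma old_vis {i : ℕ} (hi : i < n) (h : ¬ R.newS i) : R.vis i (R.u (i+1)) := by
  unfold newS at h
  push_neg at h
  obtain ⟨j, hj, hcase⟩ := h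
  rcases Classical.em (R.p j = R.p i) with h1 | h1
  · refine ⟨j+1, by omega, ?_⟩
    rw [R.u_succ, R.u_succ, h1]
  · refine ⟨j, by omega, ?_⟩
    rw [← R.ini_p (by omega : j < n), hcase h1, ← R.u_succ]

lemma vis_iff_mem {i : ℕ} (v : R.G.V) :
    R.vis i v ↔ v ∈ (Finset.range (i+1)).image R.u := by
  unfold vis
  rw [Finset.mem_image]
  constructor
  · rintro ⟨t, ht, rfl⟩
    exact ⟨t, Finset.mem_range.mpr (by omega), rfl⟩
  · rintro ⟨t, ht, rfl⟩
    exact ⟨t, by rw [Finset.mem_range] at ht; omega, rfl⟩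

lemma WMD_identity : ∀ i, i ≤ n → R.Ww i + R.Mm i = R.Dd i + 1 := by
  intro i
  induction i with
  | zero =>
    intro _
    unfold Ww Mm Dd
    simp
  | succ i ih =>
    intro hi1
    have hi : i < n := by omega
    have hid := ih (by omega)
    have hW : R.Ww (i+1) = R.Ww i + (if R.vis i (R.u (i+1)) then 0 else 1) := by
      unfold Ww
      rw [Finset.range_add_one, Finset.image_insert]
      rcases Classical.em (R.vis i (R.u (i+1))) with hv | hv
      · rw [if_pos hv, Finset.insert_eq_self.mpr ((R.vis_iff_mem _).mp hv)]
        omega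
      · rw [if_neg hv, Finset.card_insert_of_notMem
          (fun h => hv ((R.vis_iff_mem _).mpr h))]
    rw [R.Dd_succ, R.Mm_succ, hW]
    rcases Classical.em (R.newS i) with hnew | hnew
    · rcases Classical.em (R.vis i (R.u (i+1))) with hv | hv
      · have hm : R.mrg i := ⟨hnew, hv⟩
        rw [if_pos hnew, if_pos hm, if_pos hv]
        omega
      · rw [if_pos hnew, if_neg (fun (h : R.mrg i) => hv h.2), if_neg hv]
        omega
    · have hv := R.old_vis hi hnew
      rw [if_neg hnew, if_neg (fun (h : R.mrg i) => hnew h.1), if_pos hv]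
      omega

lemma Dd_le_vol : R.Dd n ≤ R.G.vol := by
  have h := R.count_ineq
  have hvol : R.G.vol = Fintype.card R.G.E / 2 := by
    unfold LGraph.vol
    rw [Nat.card_eq_fintype_card]
  omega

lemma Mm_le {L : ℕ} (hrank : R.G.rank ≤ L) : R.Mm n ≤ L := by
  have h1 := R.WMD_identity n le_rfl
  have h2 := R.count_ineq
  have h3 : R.Ww n ≤ Fintype.card R.G.V := by
    rw [← R.Vvis_card]
    exact Finset.card_le_univ _
  have hvol : R.G.vol = Fintype.card R.G.E / 2 := by
    unfold LGraph.vol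
    rw [Nat.card_eq_fintype_card]
  have hV : R.G.vol + 1 ≤ Fintype.card R.G.V + L := by
    unfold LGraph.rank at hrank
    rw [Nat.card_eq_fintype_card] at hrank
    omega
  omega

lemma Sset_card_le {i : ℕ} (hi : i < n) :
    (R.Sset i).card ≤ R.G.deg (R.u i) := by
  classical
  have hdeg : R.G.deg (R.u i) = (Finset.univ.filter (fun e => R.G.ini e = R.u i)).card := by
    unfold LGraph.deg
    rw [Nat.card_eq_fintype_card, Fintype.card_subtype]
  rw [hdeg]
  apply Finset.card_le_card_of_injOn (fun c => R.germC c)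
  · intro c hc
    unfold Sset at hc
    rw [Finset.mem_coe, Finset.mem_filter] at hc
    obtain ⟨hc1, hlt, hnew, hat, _⟩ := hc
    rw [Finset.mem_coe, Finset.mem_filter]
    refine ⟨Finset.mem_univ _, ?_⟩
    unfold germC; beta_reduce
    unfold atVC at hat
    rcases Classical.em (c % 2 = 1) with hpar | hpar
    · rw [if_pos hpar] at hat ⊢
      rw [← R.u_succ]
      exact hat
    · rw [if_neg hpar] at hat ⊢
      rw [R.ini_p (by omega : c/2 < n)]
      exact hat
  · intro c hc c' hc' hg
    replace hc := Finset.mem_coe.mp hc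
    replace hc' := Finset.mem_coe.mp hc'
    unfold Sset at hc hc'
    rw [Finset.mem_filter] at hc hc'
    obtain ⟨_, hlt, hnew, _, _⟩ := hc
    obtain ⟨_, hlt', hnew', _, _⟩ := hc'
    replace hg : (if c % 2 = 1 then R.G.bar (R.p (c/2)) else R.p (c/2)) =
        (if c' % 2 = 1 then R.G.bar (R.p (c'/2)) else R.p (c'/2)) := hg
    rcases Classical.em (c % 2 = 1) with hp1 | hp1 <;>
      rcases Classical.em (c' % 2 = 1) with hp2 | hp2
    · rw [if_pos hp1, if_pos hp2] at hg
      have := R.news_inj hnew hnew' (R.bar_inj hg)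
      omega
    · rw [if_pos hp1, if_neg hp2] at hg
      exact absurd hg.symm (R.news_disj hnew' hnew)
    · rw [if_neg hp1, if_pos hp2] at hg
      exact absurd hg (R.news_disj hnew hnew')
    · rw [if_neg hp1, if_neg hp2] at hg
      have := R.news_inj hnew hnew' hg
      omega

lemma σ_lt {L : ℕ} (hL : 2 ≤ L) (hrank : R.G.rank ≤ L)
    (hdeg1 : Nat.card {v : R.G.V // R.G.deg v = 1} ≤ 2)
    {i : ℕ} (hi : i < n) : R.σ i < 6 * L := by
  unfold σ
  rcases Classical.em (R.newS i) with hnew | hnew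
  · rw [if_pos hnew]
    split <;> omega
  · rw [if_neg hnew]
    have h0 : 0 < i := by
      rcases Nat.eq_zero_or_pos i with rfl | h0
      · exact absurd R.newS_zero hnew
      · exact h0
    have hkmem := R.keyC_mem hnew hi h0
    have hcard := R.Sset_card_le hi
    have hdeg := R.G.deg_le hrank hdeg1 (R.u i)
    have hidx : R.oldIdx i < (R.Sset i).card := by
      unfold oldIdx
      apply Finset.card_lt_card
      refine ⟨Finset.filter_subset _ _, ?_⟩
      intro hsub
      have := hsub hkmem
      rw [Finset.mem_filter] at this
      omega
    omega

lemma Dd_lt_vol {i : ℕ} (hi : i < n) (hnew : R.newS i) : R.Dd i < R.G.vol := by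
  have h1 : R.Dd (i+1) = R.Dd i + 1 := by
    rw [R.Dd_succ, if_pos hnew]
  have h2 : R.Dd (i+1) ≤ R.Dd n := R.Dd_mono (by omega)
  have := R.Dd_le_vol
  omega

lemma Mm_lt_L {L : ℕ} (hrank : R.G.rank ≤ L) {i : ℕ} (hi : i < n) (hm : R.mrg i) :
    R.Mm i < L := by
  have h1 : R.Mm (i+1) = R.Mm i + 1 := by
    rw [R.Mm_succ, if_pos hm]
  have h2 : R.Mm (i+1) ≤ R.Mm n := R.Mm_mono (by omega)
  have := R.Mm_le hrank
  omega

end Run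
section Final

lemma exists_run {k L : ℕ} {μ : ℝ} {n : ℕ}
    {w : List (Letter k)} (hck : w ∈ Ck k) (hr : MuLReadable μ L w) (hlen : w.length = n) :
    ∃ R : Run k n, R.G.rank ≤ L ∧ Nat.card {v : R.G.V // R.G.deg v = 1} ≤ 2 ∧
      ((R.G.vol : ℝ) ≤ μ * n) ∧ ∀ i (h : i < n), R.w i = w.get ⟨i, by omega⟩ := by
  obtain ⟨Γ, hrank, -, hdeg1, ⟨p, hpath, hlab⟩, hvol⟩ := hr
  have hred := hck 0
  rw [List.rotate_zero] at hred
  rw [Reduced, List.Chain', List.isChain_iff_getElem] at hred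
  refine ⟨⟨Γ, p, ?_, ?_⟩, hrank, hdeg1, ?_, ?_⟩
  · intro i hi
    exact hpath i (by omega)
  · intro i h0 hi
    obtain ⟨j, rfl⟩ : ∃ j, i = j + 1 := ⟨i - 1, by omega⟩
    have h1 := hlab (j+1) (by omega)
    have h2 := hlab j (by omega)
    simp only [Nat.add_sub_cancel]
    rw [h1, h2]
    exact hred j (by omega)
  · show (Γ.vol : ℝ) ≤ μ * n
    rw [← hlen]
    exact hvol
  · intro i h
    exact hlab i (by omega)

lemma main_count (k L : ℕ) (hL : 2 ≤ L) (hLk : L < k) (μ : ℝ) (hμ0 : 0 < μ)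
    (n : ℕ) (hn : 1 ≤ n) :
    gam {w | w ∈ Ck k ∧ MuLReadable μ L w} n ≤
      (6*L)^n * ((2*k) * ((2*k-1)^(⌊μ * (n:ℝ)⌋₊) * (n+1)^L)) := by
  classical
  set m := ⌊μ * (n:ℝ)⌋₊ with hmdef
  unfold gam
  have hex : ∀ x : {w : List (Letter k) //
      w ∈ {w | w ∈ Ck k ∧ MuLReadable μ L w} ∧ w.length = n},
      ∃ R : Run k n, R.G.rank ≤ L ∧ Nat.card {v : R.G.V // R.G.deg v = 1} ≤ 2 ∧
      ((R.G.vol : ℝ) ≤ μ * n) ∧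
      ∀ i (h : i < n), R.w i = x.val.get ⟨i, by rw [x.2.2]; exact h⟩ := by
    intro x
    exact exists_run x.2.1.1 x.2.1.2 x.2.2
  set F := fun x => Classical.choose (hex x) with hFdef
  have hspec := fun x => Classical.choose_spec (hex x)
  have hvolm : ∀ x, (F x).G.vol ≤ m := fun x => Nat.le_floor ((hspec x).2.2.1)
  have h6L : 0 < 6*L := by omega
  have h2k1 : 0 < 2*k-1 := by omega
  set f : {w : List (Letter k) // w ∈ {w | w ∈ Ck k ∧ MuLReadable μ L w} ∧ w.length = n} →
      (Fin n → Fin (6*L)) × Letter k × (Fin m → Fin (2*k-1)) × (Fin L → Fin (n+1)) :=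
    fun x =>
    (fun i => ⟨(F x).σ i % (6*L), Nat.mod_lt _ h6L⟩,
     (F x).w 0,
     fun d => ⟨(F x).rP d % (2*k-1), Nat.mod_lt _ h2k1⟩,
     fun j => ⟨(F x).νP j % (n+1), Nat.mod_lt _ (by omega)⟩) with hfdef
  have hinj : Function.Injective f := by
    intro x y hxy
    simp only [hfdef, Prod.mk.injEq] at hxy
    obtain ⟨h1, h2, h3, h4⟩ := hxy
    obtain ⟨hrank, hdeg1, hvol, hgets⟩ := hspec x
    obtain ⟨hrank', hdeg1', hvol', hgets'⟩ := hspec y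
    have hσ : ∀ i, i < n → (F x).σ i = (F y).σ i := by
      intro i hi
      have hv := congrArg Fin.val (congrFun h1 ⟨i, hi⟩)
      simp only at hv
      rw [Nat.mod_eq_of_lt ((F x).σ_lt hL hrank hdeg1 hi),
        Nat.mod_eq_of_lt ((F y).σ_lt hL hrank' hdeg1' hi)] at hv
      exact hv
    have hnw : ∀ t, t < n → ((F x).newS t ↔ (F y).newS t) := by
      intro t ht
      rw [(F x).newS_iff_σ, (F y).newS_iff_σ, hσ t ht]
    have hmg : ∀ t, t < n → ((F x).mrg t ↔ (F y).mrg t) := by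
      intro t ht
      rw [(F x).mrg_iff_σ, (F y).mrg_iff_σ, hσ t ht]
    have hDd : ∀ i, i ≤ n → (F x).Dd i = (F y).Dd i := by
      intro i hi
      unfold Run.Dd
      congr 1
      apply Finset.filter_congr
      intro t ht
      rw [Finset.mem_range] at ht
      exact hnw t (by omega)
    have hMm : ∀ i, i ≤ n → (F x).Mm i = (F y).Mm i := by
      intro i hi
      unfold Run.Mm
      congr 1
      apply Finset.filter_congr
      intro t ht
      rw [Finset.mem_range] at ht
      exact hmg t (by omega)
    have hrc : ∀ i, i < n → 0 < i → (F x).newS i → (F x).rC i = (F y).rC i := by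
      intro i hi h0 hnew
      have hnew' : (F y).newS i := (hnw i hi).mp hnew
      have hd : (F x).Dd i < m := lt_of_lt_of_le ((F x).Dd_lt_vol hi hnew) (hvolm x)
      have hv := congrArg Fin.val (congrFun h3 ⟨(F x).Dd i, hd⟩)
      simp only at hv
      rw [(F x).rP_eq hi h0 hnew] at hv
      rw [hDd i (by omega)] at hv
      rw [(F y).rP_eq hi h0 hnew'] at hv
      rw [Nat.mod_eq_of_lt ((F x).rC_lt h0 hi (by omega)),
        Nat.mod_eq_of_lt ((F y).rC_lt h0 hi (by omega))] at hv
      exact hv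
    have hν : ∀ i, i < n → (F x).mrg i → (F x).t0 i = (F y).t0 i := by
      intro i hi hmr
      have hmr' : (F y).mrg i := (hmg i hi).mp hmr
      have hMlt : (F x).Mm i < L := (F x).Mm_lt_L hrank hi hmr
      have hv := congrArg Fin.val (congrFun h4 ⟨(F x).Mm i, hMlt⟩)
      simp only at hv
      rw [(F x).νP_eq hi hmr] at hv
      rw [hMm i (by omega)] at hv
      rw [(F y).νP_eq hi hmr'] at hv
      have hb1 : (F x).t0 i < n + 1 := by
        have := ((F x).t0_spec hmr).2
        omega
      have hb1' : (F y).t0 i < n + 1 := by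
        have := ((F y).t0_spec hmr').2
        omega
      rw [Nat.mod_eq_of_lt hb1, Nat.mod_eq_of_lt hb1'] at hv
      exact hv
    have hInv := Run.core (F x) (F y) hσ h2 hrc hν n le_rfl
    have hws := hInv.2.2.2
    apply Subtype.ext
    apply List.ext_get (by rw [x.2.2, y.2.2])
    intro i hi1 hi2
    have hi : i < n := by
      have := x.2.2
      omega
    exact ((hgets i hi).symm.trans (hws i hi)).trans (hgets' i hi)
  have hcard := Nat.card_le_card_of_injective f hinj
  have hCS : Nat.card ((Fin n → Fin (6*L)) × Letter k × (Fin m → Fin (2*k-1)) ×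
      (Fin L → Fin (n+1))) = (6*L)^n * ((2*k) * ((2*k-1)^m * ((n+1)^L))) := by
    simp only [Nat.card_eq_fintype_card, Fintype.card_prod, Fintype.card_fun,
      Fintype.card_fin, Fintype.card_bool]
    ring
  rw [hCS] at hcard
  exact hcard

end Final
/-- For 2 ≤ L < k and 0 < μ < 1, the number of (μ,L)-readable cyclically reduced words
of length n is at most C(μn)^{3L+1}(6L)ⁿ(2k-1)^{μn} for a constant C independent of n. -/
theorem stmt12 (k L : ℕ) (hL : 2 ≤ L) (hLk : L < k)
    (μ : ℝ) (hμ0 : 0 < μ) (hμ1 : μ < 1) :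
    ∃ C : ℝ, 0 < C ∧ ∀ n : ℕ, 1 ≤ n →
      (gam {w | w ∈ Ck k ∧ MuLReadable μ L w} n : ℝ) ≤
        C * (μ * n) ^ (3 * L + 1) * (6 * (L : ℝ)) ^ n * (2 * (k : ℝ) - 1) ^ (μ * n) := by
  have hkpos : (0:ℝ) < (k:ℝ) := by
    have : 0 < k := by omega
    exact_mod_cast this
  have hk3 : (3:ℝ) ≤ (k:ℝ) := by
    have : 3 ≤ k := by omega
    exact_mod_cast this
  have hbase : (1:ℝ) ≤ 2*(k:ℝ)-1 := by linarith
  have hCpos : (0:ℝ) < 2*(k:ℝ) * 2^L / μ^L :=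
    div_pos (mul_pos (by linarith) (by positivity)) (pow_pos hμ0 L)
  refine ⟨2*(k:ℝ) * 2^L / μ^L, hCpos, ?_⟩
  intro n hn
  by_cases hne : Nonempty {w : List (Letter k) //
      w ∈ {w | w ∈ Ck k ∧ MuLReadable μ L w} ∧ w.length = n}
  · -- nonempty case
    obtain ⟨w, ⟨⟨hck, hread⟩, hlen⟩⟩ := hne
    have hμn : (1:ℝ) ≤ μ * n := by
      obtain ⟨Γ, -, -, -, ⟨p, -, -⟩, hvol⟩ := hread
      have hnt : Nontrivial Γ.E := ⟨p 0, Γ.bar (p 0), (Γ.bar_ne (p 0)).symm⟩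
      have h2E : 2 ≤ Fintype.card Γ.E := Fintype.one_lt_card_iff_nontrivial.mpr hnt
      have hvol1 : 1 ≤ Γ.vol := by
        unfold LGraph.vol
        rw [Nat.card_eq_fintype_card]
        omega
      have h1v : (1:ℝ) ≤ (Γ.vol : ℝ) := by exact_mod_cast hvol1
      rw [hlen] at hvol
      linarith
    set m := ⌊μ * (n:ℝ)⌋₊ with hmdef
    have hcount := main_count k L hL hLk μ hμ0 n hn
    have hc2k : 1 ≤ 2*k := by omega
    have hcastA : ((2*k-1 : ℕ) : ℝ) = 2*(k:ℝ) - 1 := by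
      rw [Nat.cast_sub hc2k]
      push_cast
      ring
    have step1 : (gam {w | w ∈ Ck k ∧ MuLReadable μ L w} n : ℝ) ≤
        (6*(L:ℝ))^n * ((2*(k:ℝ)) * ((2*(k:ℝ)-1)^m * ((n:ℝ)+1)^L)) := by
      calc (gam {w | w ∈ Ck k ∧ MuLReadable μ L w} n : ℝ)
          ≤ (((6*L)^n * ((2*k) * ((2*k-1)^m * (n+1)^L)) : ℕ) : ℝ) := by exact_mod_cast hcount
        _ = (6*(L:ℝ))^n * ((2*(k:ℝ)) * ((2*(k:ℝ)-1)^m * ((n:ℝ)+1)^L)) := by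
            push_cast [hcastA]
            ring
    have hA : (2*(k:ℝ)-1)^m ≤ (2*(k:ℝ)-1) ^ (μ * (n:ℝ)) := by
      rw [← Real.rpow_natCast (2*(k:ℝ)-1) m]
      exact Real.rpow_le_rpow_of_exponent_le hbase (Nat.floor_le (by positivity))
    have hB : ((n:ℝ)+1)^L ≤ 2^L * ((μ*(n:ℝ))^(3*L+1) / μ^L) := by
      have hn1 : (1:ℝ) ≤ (n:ℝ) := by exact_mod_cast hn
      have b1 : ((n:ℝ)+1)^L ≤ (2*(n:ℝ))^L := by
        apply pow_le_pow_left₀ (by positivity)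
        linarith
      have b2 : (μ*(n:ℝ))^L ≤ (μ*(n:ℝ))^(3*L+1) :=
        pow_le_pow_right₀ hμn (by omega)
      have b3 : (2*(n:ℝ))^L = 2^L * ((μ*(n:ℝ))^L / μ^L) := by
        rw [mul_pow, mul_pow]
        field_simp
      calc ((n:ℝ)+1)^L ≤ (2*(n:ℝ))^L := b1
        _ = 2^L * ((μ*(n:ℝ))^L / μ^L) := b3
        _ ≤ 2^L * ((μ*(n:ℝ))^(3*L+1) / μ^L) := by gcongr
    calc (gam {w | w ∈ Ck k ∧ MuLReadable μ L w} n : ℝ)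
        ≤ (6*(L:ℝ))^n * ((2*(k:ℝ)) * ((2*(k:ℝ)-1)^m * ((n:ℝ)+1)^L)) := step1
      _ ≤ (6*(L:ℝ))^n * ((2*(k:ℝ)) *
          ((2*(k:ℝ)-1) ^ (μ * (n:ℝ)) * (2^L * ((μ*(n:ℝ))^(3*L+1) / μ^L)))) := by
          have h2knn : (0:ℝ) ≤ 2*(k:ℝ)-1 := by linarith
          gcongr
      _ = 2*(k:ℝ) * 2^L / μ^L * (μ * ↑n) ^ (3 * L + 1) * (6 * (L:ℝ)) ^ n *
          (2 * (k:ℝ) - 1) ^ (μ * ↑n) := by ring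
  · -- empty case
    have hz : (gam {w | w ∈ Ck k ∧ MuLReadable μ L w} n : ℝ) = 0 := by
      haveI := not_nonempty_iff.mp hne
      unfold gam
      rw [Nat.card_of_isEmpty]
      norm_num
    rw [hz]
    have h1 : (0:ℝ) ≤ (μ * ↑n) ^ (3 * L + 1) := by positivity
    have h2 : (0:ℝ) ≤ (6 * (L:ℝ)) ^ n := by positivity
    have h3 : (0:ℝ) ≤ (2 * (k:ℝ) - 1) ^ (μ * ↑n) := Real.rpow_nonneg (by linarith) _
    have := le_of_lt hCpos
    positivity
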